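/- arXiv:1109.5124 — 5 statements merged into one kernel-verified Lean document; each statement's English description precedes it below -/
import Mathlib

section
/- Let a > 1 and define g(x) = 1 - x + (1/a)(x - x²)·log(1 - a/x) for x > a. Then g(x) → a/2 as x → +∞. -/
open Real Filter

/-- Let `a > 1` and `g(x) = 1 - x + (1/a)*(x - x^2)*log(1 - a/x)` for `x > a`.
Then `g(x) → a/2` as `x → +∞`. -/
theorem g_limit_atTop (a : ℝ) (ha : 1 < a) :
    Tendsto (fun x : ℝ => 1 - x + (1/a) * (x - x^2) * Real.log (1 - a/x))
      atTop (nhds (a/2)) := by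
  have ha0 : (0:ℝ) < a := by linarith
  have key : Tendsto (fun x : ℝ =>
      (1 - x + (1/a) * (x - x^2) * Real.log (1 - a/x)) - a/2) atTop (nhds 0) := by
    apply squeeze_zero_norm' (a := fun x : ℝ => (a/2 + 2*a^2)/x)
    · filter_upwards [eventually_ge_atTop (2*a)] with x hx
      have hx0 : 0 < x := by linarith
      have htlt : a/x < 1 := by rw [div_lt_one hx0]; linarith
      have ht0 : 0 < a/x := div_pos ha0 hx0
      have hthalf : a/x ≤ 1/2 := by
        rw [div_le_div_iff₀ hx0 (by norm_num)]; linarith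
      set r := Real.log (1 - a/x) + (a/x + (a/x)^2/2) with hrdef
      have hr : |r| ≤ 2 * (a/x)^3 := by
        have h := Real.abs_log_sub_add_sum_range_le
          (x := a/x) (by rw [abs_of_pos ht0]; exact htlt) 2
        rw [abs_of_pos ht0] at h
        simp [Finset.sum_range_succ] at h
        have h1 : (a/x)^3 / (1 - a/x) ≤ 2 * (a/x)^3 := by
          rw [div_le_iff₀ (by linarith)]
          nlinarith [pow_pos ht0 3]
        calc |r| = |a/x + (a/x)^2/2 + Real.log (1 - a/x)| := by
              rw [hrdef]; ring_nf
          _ ≤ (a/x)^3 / (1 - a/x) := by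
              convert h using 2; ring
          _ ≤ 2 * (a/x)^3 := h1
      have hlog : Real.log (1 - a/x) = r - (a/x + (a/x)^2/2) := by
        rw [hrdef]; ring
      have heq : (1 - x + (1/a) * (x - x^2) * Real.log (1 - a/x)) - a/2
          = (1/a)*(x - x^2)*r - a/(2*x) := by
        rw [hlog]; field_simp; ring
      rw [Real.norm_eq_abs, heq]
      have h2 : |(1/a)*(x - x^2)*r| ≤ 2*a^2/x := by
        rw [abs_mul, abs_mul]
        have hxa : |(1:ℝ)/a| = 1/a := abs_of_pos (by positivity)
        have hxx : |x - x^2| ≤ x^2 := by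
          rw [abs_le]; constructor <;> nlinarith
        calc |1/a| * |x - x^2| * |r| ≤ (1/a) * x^2 * (2*(a/x)^3) := by
              apply mul_le_mul _ hr (abs_nonneg _) (by positivity)
              rw [hxa]
              exact mul_le_mul_of_nonneg_left hxx (by positivity)
          _ = 2*a^2/x := by field_simp
      calc |(1/a)*(x - x^2)*r - a/(2*x)|
          ≤ |(1/a)*(x - x^2)*r| + |a/(2*x)| := abs_sub _ _
        _ ≤ 2*a^2/x + a/(2*x) := by
            apply add_le_add h2
            rw [abs_of_pos (by positivity)]
        _ = (a/2 + 2*a^2)/x := by field_simp; ring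
    · exact Tendsto.div_atTop tendsto_const_nhds tendsto_id
  have := key.add_const (a/2)
  simpa using this
end

section
/- Let a ≥ 3/2 and g(x) = 1 - x + (1/a)(x-x²)·log(1-a/x). Then g is strictly decreasing on (a, ∞). -/
open Real

open Set


lemma L1 : ∀ u ∈ Ioo (0:ℝ) 1, -2*u + 2*Real.log u + 2 < 0 := by
  have hd : ∀ u : ℝ, 0 < u →
      HasDerivAt (fun u => -2*u + 2*Real.log u + 2) (-2 + 2*u⁻¹) u := by
    intro u hu
    have h1 := (Real.hasDerivAt_log hu.ne').const_mul 2
    have h2 := (hasDerivAt_id u).const_mul (-2)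
    simpa [mul_comm] using (h2.add h1).add_const 2
  have hmono : StrictMonoOn (fun u => -2*u + 2*Real.log u + 2) (Ioc (0:ℝ) 1) := by
    apply strictMonoOn_of_deriv_pos (convex_Ioc 0 1)
    · intro u hu; exact ((hd u hu.1).continuousAt).continuousWithinAt
    · intro u hu
      rw [interior_Ioc] at hu
      rw [(hd u hu.1).deriv]
      have : (1:ℝ) < u⁻¹ := (one_lt_inv₀ hu.1).mpr hu.2
      linarith
  intro u hu
  have := hmono ⟨hu.1, hu.2.le⟩ (by norm_num : (1:ℝ) ∈ Ioc (0:ℝ) 1) hu.2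
  simpa using this

-- L2 (A): ψ(u) = 1 - u² + 2u log u > 0 on (0,1), ψ' = -2u + 2 log u + 2 < 0
lemma L2 : ∀ u ∈ Ioo (0:ℝ) 1, 0 < 1 - u^2 + 2*u*Real.log u := by
  have hd : ∀ u : ℝ, 0 < u →
      HasDerivAt (fun u => 1 - u^2 + 2*u*Real.log u) (-2*u + 2*Real.log u + 2) u := by
    intro u hu
    have h1 : HasDerivAt (fun u : ℝ => 1 - u^2) (-(2*u)) u := by
      simpa using ((hasDerivAt_pow 2 u).const_sub 1)
    have h2 : HasDerivAt (fun u : ℝ => 2*u*Real.log u) (2*Real.log u + 2) u := by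
      have := ((hasDerivAt_id u).const_mul 2).mul (Real.hasDerivAt_log hu.ne')
      refine this.congr_deriv ?_
      field_simp
      simp only [id]
      ring
    refine (h1.add h2).congr_deriv ?_
    ring
  have hanti : StrictAntiOn (fun u => 1 - u^2 + 2*u*Real.log u) (Ioc (0:ℝ) 1) := by
    apply strictAntiOn_of_deriv_neg (convex_Ioc 0 1)
    · intro u hu; exact ((hd u hu.1).continuousAt).continuousWithinAt
    · intro u hu
      rw [interior_Ioc] at hu
      rw [(hd u hu.1).deriv]
      exact L1 u hu
  intro u hu
  have := hanti ⟨hu.1, hu.2.le⟩ (by norm_num : (1:ℝ) ∈ Ioc (0:ℝ) 1) hu.2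
  simpa using this

-- L3: 2 - 2 log u - 2/u < 0 on (0,1), deriv = -2/u + 2/u² > 0
lemma L3 : ∀ u ∈ Ioo (0:ℝ) 1, 2 - 2*Real.log u - 2/u < 0 := by
  have hd : ∀ u : ℝ, 0 < u →
      HasDerivAt (fun u => 2 - 2*Real.log u - 2/u) (-2/u + 2/u^2) u := by
    intro u hu
    have h1 : HasDerivAt (fun u : ℝ => 2 - 2*Real.log u) (-(2*u⁻¹)) u := by
      simpa using ((Real.hasDerivAt_log hu.ne').const_mul 2).const_sub 2
    have h2 : HasDerivAt (fun u : ℝ => 2/u) (-(2/u^2)) u := by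
      simpa [div_eq_mul_inv] using (hasDerivAt_inv hu.ne').const_mul 2
    refine (h1.sub h2).congr_deriv ?_
    field_simp
    ring
  have hmono : StrictMonoOn (fun u => 2 - 2*Real.log u - 2/u) (Ioc (0:ℝ) 1) := by
    apply strictMonoOn_of_deriv_pos (convex_Ioc 0 1)
    · intro u hu; exact ((hd u hu.1).continuousAt).continuousWithinAt
    · intro u hu
      rw [interior_Ioc] at hu
      rw [(hd u hu.1).deriv]
      have h1 : 0 < u := hu.1
      have h2 : u < 1 := hu.2
      have : -2/u + 2/u^2 = 2*(1-u)/u^2 := by field_simp; ring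
      rw [this]
      have : (0:ℝ) < 1 - u := by linarith
      positivity
  intro u hu
  have := hmono ⟨hu.1, hu.2.le⟩ (by norm_num : (1:ℝ) ∈ Ioc (0:ℝ) 1) hu.2
  simpa using this


-- L4: 4u - 4 - (2+2u) log u > 0 on (0,1)
lemma L4 : ∀ u ∈ Ioo (0:ℝ) 1, 0 < 4*u - 4 - (2+2*u)*Real.log u := by
  have hd : ∀ u : ℝ, 0 < u →
      HasDerivAt (fun u => 4*u - 4 - (2+2*u)*Real.log u) (2 - 2*Real.log u - 2/u) u := by
    intro u hu
    have h1 : HasDerivAt (fun u : ℝ => 4*u - 4) 4 u := by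
      simpa using ((hasDerivAt_id u).const_mul 4).sub_const 4
    have h2 : HasDerivAt (fun u : ℝ => (2+2*u)*Real.log u)
        (2*Real.log u + (2+2*u)*u⁻¹) u := by
      have ha : HasDerivAt (fun u : ℝ => 2+2*u) 2 u := by
        simpa using ((hasDerivAt_id u).const_mul 2).const_add 2
      exact ha.mul (Real.hasDerivAt_log hu.ne')
    refine (h1.sub h2).congr_deriv ?_
    field_simp
    ring
  have hanti : StrictAntiOn (fun u => 4*u - 4 - (2+2*u)*Real.log u) (Ioc (0:ℝ) 1) := by
    apply strictAntiOn_of_deriv_neg (convex_Ioc 0 1)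
    · intro u hu; exact ((hd u hu.1).continuousAt).continuousWithinAt
    · intro u hu
      rw [interior_Ioc] at hu
      rw [(hd u hu.1).deriv]
      exact L3 u hu
  intro u hu
  have := hanti ⟨hu.1, hu.2.le⟩ (by norm_num : (1:ℝ) ∈ Ioc (0:ℝ) 1) hu.2
  simpa using this

-- L5 (B): H(u) = -1/2 - 2u + (5/2)u² - (2u+u²) log u < 0 on (0,1)
lemma L5 : ∀ u ∈ Ioo (0:ℝ) 1,
    -1/2 - 2*u + 5/2*u^2 - (2*u+u^2)*Real.log u < 0 := by
  have hd : ∀ u : ℝ, 0 < u →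
      HasDerivAt (fun u => -1/2 - 2*u + 5/2*u^2 - (2*u+u^2)*Real.log u)
        (4*u - 4 - (2+2*u)*Real.log u) u := by
    intro u hu
    have h1 : HasDerivAt (fun u : ℝ => -1/2 - 2*u + 5/2*u^2) (-2 + 5/2*(2*u)) u := by
      have := (((hasDerivAt_id u).const_mul 2).const_sub (-1/2)).add
        ((hasDerivAt_pow 2 u).const_mul (5/2))
      simpa [Pi.add_def, sub_add_eq_add_sub] using this
    have h2 : HasDerivAt (fun u : ℝ => (2*u+u^2)*Real.log u)
        ((2+2*u)*Real.log u + (2*u+u^2)*u⁻¹) u := by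
      have ha : HasDerivAt (fun u : ℝ => 2*u+u^2) (2+2*u) u := by
        have := ((hasDerivAt_id u).const_mul 2).add (hasDerivAt_pow 2 u)
        simpa [Pi.add_def] using this
      exact ha.mul (Real.hasDerivAt_log hu.ne')
    refine (h1.sub h2).congr_deriv ?_
    field_simp
    ring
  have hmono : StrictMonoOn (fun u => -1/2 - 2*u + 5/2*u^2 - (2*u+u^2)*Real.log u)
      (Ioc (0:ℝ) 1) := by
    apply strictMonoOn_of_deriv_pos (convex_Ioc 0 1)
    · intro u hu; exact ((hd u hu.1).continuousAt).continuousWithinAt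
    · intro u hu
      rw [interior_Ioc] at hu
      rw [(hd u hu.1).deriv]
      exact L4 u hu
  intro u hu
  have := hmono ⟨hu.1, hu.2.le⟩ (by norm_num : (1:ℝ) ∈ Ioc (0:ℝ) 1) hu.2
  norm_num at this ⊢
  linarith

/-- If `a ≥ 3/2`, then `g(x) = 1 - x + (1/a)*(x - x^2)*log(1 - a/x)` is strictly
decreasing on `(a,∞)`. -/

theorem g_strictAnti (a : ℝ) (ha : 3/2 ≤ a) :
    StrictAntiOn (fun x : ℝ => 1 - x + (1/a) * (x - x^2) * Real.log (1 - a/x))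
      (Set.Ioi a) := by
  have ha0 : (0:ℝ) < a := by linarith
  have hder : ∀ x ∈ Set.Ioi a,
      HasDerivAt (fun x : ℝ => 1 - x + (1/a) * (x - x^2) * Real.log (1 - a/x))
        (-1 + (1/a)*(1-2*x)*Real.log (1 - a/x) + (1/a)*(x-x^2)*((a/x^2)/(1-a/x))) x := by
    intro x hx
    rw [Set.mem_Ioi] at hx
    have hx0 : 0 < x := lt_trans ha0 hx
    have h1pos : 0 < 1 - a/x := by
      rw [sub_pos, div_lt_one hx0]; exact hx
    have hinner : HasDerivAt (fun x : ℝ => 1 - a/x) (a/x^2) x := by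
      have := ((hasDerivAt_inv hx0.ne').const_mul a).const_sub 1
      simp only [div_eq_mul_inv]
      refine this.congr_deriv ?_
      field_simp
    have hlog : HasDerivAt (fun x : ℝ => Real.log (1 - a/x)) ((a/x^2)/(1-a/x)) x :=
      hinner.log h1pos.ne'
    have hpoly : HasDerivAt (fun x : ℝ => (1/a)*(x-x^2)) ((1/a)*(1-2*x)) x := by
      have := ((hasDerivAt_id x).sub (hasDerivAt_pow 2 x)).const_mul (1/a)
      refine this.congr_deriv ?_
      simp
    have hfirst : HasDerivAt (fun x : ℝ => 1 - x) (-1) x := by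
      simpa using (hasDerivAt_id x).const_sub 1
    have := hfirst.add (hpoly.mul hlog)
    refine this.congr_deriv ?_
    ring
  apply strictAntiOn_of_deriv_neg (convex_Ioi a)
  · intro x hx
    exact (hder x hx).continuousAt.continuousWithinAt
  · intro x hx
    rw [interior_Ioi] at hx
    rw [(hder x hx).deriv]
    rw [Set.mem_Ioi] at hx
    have hx0 : 0 < x := lt_trans ha0 hx
    have hxa : 0 < x - a := sub_pos.mpr hx
    set u := (x-a)/x with hu_def
    have hu0 : 0 < u := div_pos hxa hx0
    have hu1 : u < 1 := by
      rw [hu_def, div_lt_one hx0]; linarith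
    have h1ax : 1 - a/x = u := by
      rw [hu_def]; field_simp
    have hA := L2 u ⟨hu0, hu1⟩
    have hB := L5 u ⟨hu0, hu1⟩
    rw [h1ax]
    set L := Real.log u with hL
    have key : a^2*(x-a)*(-1 + (1/a)*(1-2*x)*L + (1/a)*(x-x^2)*((a/x^2)/u))
        = x^2*(-1/2 - 2*u + 5/2*u^2 - (2*u+u^2)*L)
          - (a-3/2)*(x^2*(1 - u^2 + 2*u*L)) := by
      rw [hu_def]
      field_simp
      ring
    have hBx : x^2*(-1/2 - 2*u + 5/2*u^2 - (2*u+u^2)*L) < 0 :=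
      mul_neg_of_pos_of_neg (by positivity) hB
    have hAx : 0 ≤ (a-3/2)*(x^2*(1 - u^2 + 2*u*L)) :=
      mul_nonneg (by linarith) (mul_pos (by positivity) hA).le
    have hlt : a^2*(x-a)*(-1 + (1/a)*(1-2*x)*L + (1/a)*(x-x^2)*((a/x^2)/u)) < 0 := by
      rw [key]; linarith
    have hprod : 0 < a^2*(x-a) := by positivity
    have hrw : -1 + (1/a)*(1-2*x)*L + (1/a)*(x-x^2)*((a/x^2)/u)
        = (a^2*(x-a)*(-1 + (1/a)*(1-2*x)*L + (1/a)*(x-x^2)*((a/x^2)/u)))/(a^2*(x-a)) := by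
      field_simp
    rw [hrw]
    exact div_neg_of_neg_of_pos hlt hprod
end

section
/- Let 1 < a < 3/2 and g(x) = 1-x+(1/a)(x-x²)·log(1-a/x) for x > a. Then there exists a unique x_a > a such that g is strictly decreasing on (a, x_a) and strictly increasing on (x_a, ∞). -/
open Real Set Filter Topology


noncomputable def phiA (a : ℝ) : ℝ → ℝ :=
  fun x => -1 + ((1-2*x)/a) * Real.log (1 - a/x) + (1-x)/(x-a)

noncomputable def psiA (a : ℝ) : ℝ → ℝ :=
  fun x => -(2/a) * Real.log (1 - a/x) + (1-2*x)/(x*(x-a)) + (a-1)/(x-a)^2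

lemma one_sub_div_pos {a x : ℝ} (ha : 1 < a) (hx : a < x) : 0 < 1 - a/x := by
  have hx0 : (0:ℝ) < x := by linarith
  rw [sub_pos, div_lt_one hx0]; exact hx

lemma hasDerivAt_log_part {a x : ℝ} (ha : 1 < a) (hx : a < x) :
    HasDerivAt (fun y : ℝ => Real.log (1 - a/y)) (a/(x*(x-a))) x := by
  have hx0 : (0:ℝ) < x := by linarith
  have hxa : (0:ℝ) < x - a := by linarith
  have h1 : HasDerivAt (fun y : ℝ => 1 - a/y) (a/x^2) x := by
    have := ((hasDerivAt_const x a).div (hasDerivAt_id x) hx0.ne').const_sub 1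
    refine this.congr_deriv (Eq.symm ?_)
    simp only [id_eq]
    field_simp
    ring
  have := h1.log (one_sub_div_pos ha hx).ne'
  refine this.congr_deriv (Eq.symm ?_)
  rw [div_div]
  congr 1
  field_simp

lemma hasDerivAt_gA {a x : ℝ} (ha : 1 < a) (hx : a < x) :
    HasDerivAt (fun x : ℝ => 1 - x + (1/a) * (x - x^2) * Real.log (1 - a/x)) (phiA a x) x := by
  have hx0 : (0:ℝ) < x := by linarith
  have hxa : (0:ℝ) < x - a := by linarith
  have ha0 : (0:ℝ) < a := by linarith
  have h1 : HasDerivAt (fun y : ℝ => 1 - y) (-1) x := by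
    simpa using (hasDerivAt_id x).const_sub 1
  have hq : HasDerivAt (fun y : ℝ => (1/a) * (y - y^2)) ((1/a) * (1 - 2*x)) x := by
    have := ((hasDerivAt_id x).sub (hasDerivAt_pow 2 x)).const_mul (1/a)
    refine this.congr_deriv (Eq.symm ?_)
    ring
  have hm := hq.mul (hasDerivAt_log_part ha hx)
  have := h1.add hm
  refine this.congr_deriv (Eq.symm ?_)
  unfold phiA
  have hL : (1:ℝ) - a/x ≠ 0 := (one_sub_div_pos ha hx).ne'
  field_simp
  ring

lemma hasDerivAt_phiA {a x : ℝ} (ha : 1 < a) (hx : a < x) :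
    HasDerivAt (phiA a) (psiA a x) x := by
  have hx0 : (0:ℝ) < x := by linarith
  have hxa : (0:ℝ) < x - a := by linarith
  have ha0 : (0:ℝ) < a := by linarith
  have h1 : HasDerivAt (fun y : ℝ => ((1-2*y)/a)) (-2/a) x := by
    have := ((hasDerivAt_id x).const_mul 2).const_sub 1 |>.div_const a
    refine this.congr_deriv (Eq.symm ?_)
    ring
  have h2 := h1.mul (hasDerivAt_log_part ha hx)
  have h3 : HasDerivAt (fun y : ℝ => (1-y)/(y-a)) ((a-1)/(x-a)^2) x := by
    have hd : HasDerivAt (fun y : ℝ => y - a) 1 x := (hasDerivAt_id x).sub_const a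
    have hn : HasDerivAt (fun y : ℝ => 1 - y) (-1) x := by
      simpa using (hasDerivAt_id x).const_sub 1
    have := hn.div hd hxa.ne'
    refine this.congr_deriv (Eq.symm ?_)
    field_simp
    ring
  have hc : HasDerivAt (fun _ : ℝ => (-1:ℝ)) 0 x := hasDerivAt_const x (-1)
  have := (hc.add h2).add h3
  refine this.congr_deriv (Eq.symm ?_)
  unfold psiA
  have hL : (1:ℝ) - a/x ≠ 0 := (one_sub_div_pos ha hx).ne'
  field_simp
  ring

lemma hasDerivAt_psiA {a x : ℝ} (ha : 1 < a) (hx : a < x) :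
    HasDerivAt (psiA a) (a*((3-2*a)*x - a)/(x^2*(x-a)^3)) x := by
  have hx0 : (0:ℝ) < x := by linarith
  have hxa : (0:ℝ) < x - a := by linarith
  have ha0 : (0:ℝ) < a := by linarith
  have h1 := (hasDerivAt_log_part ha hx).const_mul (-(2/a))
  have h2 : HasDerivAt (fun y : ℝ => (1-2*y)/(y*(y-a))) ((2*x^2-2*x+a)/(x^2*(x-a)^2)) x := by
    have hn : HasDerivAt (fun y : ℝ => 1 - 2*y) (-2) x := by
      simpa using ((hasDerivAt_id x).const_mul 2).const_sub 1
    have hd : HasDerivAt (fun y : ℝ => y*(y-a)) (1*(x-a) + x*1) x :=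
      (hasDerivAt_id x).mul ((hasDerivAt_id x).sub_const a)
    have hden : x*(x-a) ≠ 0 := by positivity
    have := hn.div hd hden
    refine this.congr_deriv (Eq.symm ?_)
    field_simp
    ring
  have h3 : HasDerivAt (fun y : ℝ => (a-1)/(y-a)^2) (-2*(a-1)/(x-a)^3) x := by
    have hd : HasDerivAt (fun y : ℝ => (y-a)^2) (2*(x-a)) x := by
      have := ((hasDerivAt_id x).sub_const a).pow 2
      refine this.congr_deriv (Eq.symm ?_)
      simp only [id_eq, pow_one, Nat.cast_ofNat]
      ring
    have := (hasDerivAt_const x (a-1)).div hd (by positivity)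
    refine this.congr_deriv (Eq.symm ?_)
    field_simp
    ring
  have := (h1.add h2).add h3
  refine this.congr_deriv (Eq.symm ?_)
  field_simp
  ring


lemma tendsto_one_sub_div (a : ℝ) : Tendsto (fun x : ℝ => 1 - a/x) atTop (𝓝 1) := by
  simpa using tendsto_const_nhds.sub (tendsto_const_nhds.div_atTop (tendsto_id (α := ℝ)))

lemma log_part_tendsto (a : ℝ) : Tendsto (fun x : ℝ => Real.log (1 - a/x)) atTop (𝓝 0) := by
  have := (Real.continuousAt_log one_ne_zero).tendsto.comp (tendsto_one_sub_div a)
  simpa [Function.comp_def] using this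

lemma xlog_tendsto (a : ℝ) : Tendsto (fun x : ℝ => x * Real.log (1 - a/x)) atTop (𝓝 (-a)) := by
  simpa [sub_eq_add_neg, neg_div] using Real.tendsto_mul_log_one_add_div_atTop (-a)

lemma frac_tendsto (a : ℝ) : Tendsto (fun x : ℝ => (1-x)/(x-a)) atTop (𝓝 (-1)) := by
  have hn : Tendsto (fun x : ℝ => 1/x - 1) atTop (𝓝 (-1)) := by
    simpa using ((tendsto_inv_atTop_zero (𝕜 := ℝ)).congr (fun x => (one_div x).symm)).sub
      (tendsto_const_nhds (x := (1:ℝ)))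
  have h := hn.div (tendsto_one_sub_div a) one_ne_zero
  rw [show (-1:ℝ)/1 = -1 by norm_num] at h
  refine h.congr' ?_
  filter_upwards [eventually_gt_atTop (max a 0)] with x hx
  have hx0 : (0:ℝ) < x := lt_of_le_of_lt (le_max_right a 0) hx
  have hxa : a < x := lt_of_le_of_lt (le_max_left a 0) hx
  simp only [Pi.div_apply]
  field_simp

lemma phiA_tendsto {a : ℝ} (ha : 1 < a) : Tendsto (phiA a) atTop (𝓝 0) := by
  have ha0 : a ≠ 0 := by positivity
  have h : Tendsto (fun x : ℝ => -1 + ((1/a) * Real.log (1 - a/x)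
      - (2/a) * (x * Real.log (1 - a/x))) + (1-x)/(x-a)) atTop
      (𝓝 (-1 + ((1/a) * 0 - (2/a) * (-a)) + (-1))) := by
    exact (tendsto_const_nhds.add (((log_part_tendsto a).const_mul (1/a)).sub
      ((xlog_tendsto a).const_mul (2/a)))).add (frac_tendsto a)
  have : (-1 + ((1/a) * 0 - (2/a) * (-a)) + (-1) : ℝ) = 0 := by
    field_simp
    ring
  rw [this] at h
  refine h.congr fun x => ?_
  unfold phiA
  ring

lemma psiA_tendsto {a : ℝ} (ha : 1 < a) : Tendsto (psiA a) atTop (𝓝 0) := by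
  have h1 := (log_part_tendsto a).const_mul (-(2/a))
  have h2 : Tendsto (fun x : ℝ => (1-2*x)/(x*(x-a))) atTop (𝓝 0) := by
    have hn : Tendsto (fun x : ℝ => (1/x - 2) * (x-a)⁻¹) atTop (𝓝 ((0-2) * 0)) := by
      refine (((tendsto_inv_atTop_zero (𝕜 := ℝ)).congr (fun x => (one_div x).symm)).sub
        tendsto_const_nhds).mul ?_
      exact tendsto_inv_atTop_zero.comp (tendsto_atTop_add_const_right _ (-a) tendsto_id)
    rw [show ((0-2) * 0 : ℝ) = 0 by norm_num] at hn
    refine hn.congr' ?_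
    filter_upwards [eventually_gt_atTop (max a 0)] with x hx
    have hx0 : (0:ℝ) < x := lt_of_le_of_lt (le_max_right a 0) hx
    have hxa : a < x := lt_of_le_of_lt (le_max_left a 0) hx
    have : x - a ≠ 0 := by intro h; linarith
    field_simp
  have h3 : Tendsto (fun x : ℝ => (a-1)/(x-a)^2) atTop (𝓝 0) := by
    have : Tendsto (fun x : ℝ => ((x-a)^2)⁻¹) atTop (𝓝 0) :=
      tendsto_inv_atTop_zero.comp
        ((tendsto_pow_atTop (two_ne_zero)).comp (tendsto_atTop_add_const_right _ (-a) tendsto_id))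
    simpa [div_eq_mul_inv] using (this.const_mul (a-1))
  have h := (h1.add h2).add h3
  norm_num at h
  exact h.congr fun x => by unfold psiA; ring

lemma phiA_neg_near {a : ℝ} (ha : 1 < a) : ∀ᶠ x in 𝓝[>] a, phiA a x < 0 := by
  have ha0 : (0:ℝ) < a := by linarith
  have key : Tendsto (fun x => (x-a) * phiA a x) (𝓝[>] a) (𝓝 (1-a)) := by
    have hF : Tendsto (fun x : ℝ => -(x-a) + ((1-2*x)/a) *
        ((x-a)*Real.log (x-a) - (x-a)*Real.log x) + (1-x)) (𝓝[>] a) (𝓝 (1-a)) := by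
      have t1 : Tendsto (fun x : ℝ => (x-a)*Real.log (x-a)) (𝓝 a) (𝓝 0) := by
        have hc := Real.continuous_mul_log.comp (continuous_sub_right a)
        have := hc.tendsto a
        simpa [Function.comp_def] using this
      have t2 : Tendsto (fun x : ℝ => (x-a)*Real.log x) (𝓝 a) (𝓝 0) := by
        have : ContinuousAt (fun x : ℝ => (x-a)*Real.log x) a :=
          (continuous_id.sub continuous_const).continuousAt.mul
            (Real.continuousAt_log ha0.ne')
        simpa using this.tendsto
      have t3 : Tendsto (fun x : ℝ => (1-2*x)/a) (𝓝 a) (𝓝 ((1-2*a)/a)) :=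
        (((continuous_const.sub (continuous_const.mul continuous_id)).div_const a).tendsto a)
      have t4 : Tendsto (fun x : ℝ => -(x-a)) (𝓝 a) (𝓝 0) := by
        have := ((continuous_id.sub (continuous_const (y := a))).neg).tendsto a
        simpa [Pi.sub_def, Pi.neg_def, neg_sub] using this
      have t5 : Tendsto (fun x : ℝ => (1-x)) (𝓝 a) (𝓝 (1-a)) :=
        (continuous_const.sub continuous_id).tendsto a
      have h := (t4.add (t3.mul (t1.sub t2))).add t5
      have h0 : (0 + (1 - 2*a)/a * (0 - 0) + (1 - a) : ℝ) = 1 - a := by ring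
      rw [h0] at h
      exact h.mono_left nhdsWithin_le_nhds
    refine hF.congr' ?_
    filter_upwards [self_mem_nhdsWithin] with x hx
    have hxa : a < x := hx
    have hx0 : (0:ℝ) < x := by linarith
    have hxa0 : x - a ≠ 0 := by intro h; linarith
    have hlog : Real.log (1 - a/x) = Real.log (x-a) - Real.log x := by
      rw [show (1 - a/x) = (x-a)/x by field_simp, Real.log_div hxa0 hx0.ne']
    unfold phiA
    rw [hlog]
    field_simp
  have h1 : ∀ᶠ x in 𝓝[>] a, (x-a) * phiA a x < 0 :=
    key.eventually_lt_const (by linarith)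
  filter_upwards [h1, self_mem_nhdsWithin] with x hx1 hx2
  have hxa : (0:ℝ) < x - a := by simpa [sub_pos] using (hx2 : a < x)
  by_contra h
  push_neg at h
  nlinarith

lemma psiA_pos_near {a : ℝ} (ha : 1 < a) : ∀ᶠ x in 𝓝[>] a, 0 < psiA a x := by
  have ha0 : (0:ℝ) < a := by linarith
  have key : Tendsto (fun x => (x-a)^2 * psiA a x) (𝓝[>] a) (𝓝 (a-1)) := by
    have hF : Tendsto (fun x : ℝ => -(2/a) * ((x-a)*((x-a)*Real.log (x-a))
        - (x-a)^2*Real.log x) + (1-2*x)*(x-a)/x + (a-1)) (𝓝[>] a) (𝓝 (a-1)) := by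
      have t1 : Tendsto (fun x : ℝ => (x-a)*((x-a)*Real.log (x-a))) (𝓝 a) (𝓝 0) := by
        have tb : Tendsto (fun x : ℝ => (x-a)*Real.log (x-a)) (𝓝 a) (𝓝 0) := by
          have hc := Real.continuous_mul_log.comp (continuous_sub_right a)
          have := hc.tendsto a
          simpa [Function.comp_def] using this
        have hc : Tendsto (fun x : ℝ => x - a) (𝓝 a) (𝓝 0) := by
          have := (continuous_sub_right a).tendsto a
          simpa using this
        simpa using hc.mul tb
      have t2 : Tendsto (fun x : ℝ => (x-a)^2*Real.log x) (𝓝 a) (𝓝 0) := by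
        have : ContinuousAt (fun x : ℝ => (x-a)^2*Real.log x) a :=
          (((continuous_id.sub continuous_const).pow 2).continuousAt).mul
            (Real.continuousAt_log ha0.ne')
        simpa using this.tendsto
      have t3 : Tendsto (fun x : ℝ => (1-2*x)*(x-a)/x) (𝓝 a) (𝓝 0) := by
        have : ContinuousAt (fun x : ℝ => (1-2*x)*(x-a)/x) a :=
          (((continuous_const.sub (continuous_const.mul continuous_id)).mul
            (continuous_id.sub continuous_const)).continuousAt).div
            continuousAt_id ha0.ne'
        simpa using this.tendsto
      have h := (((t1.sub t2).const_mul (-(2/a))).add t3).add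
        (tendsto_const_nhds (x := (a-1:ℝ)))
      have h0 : (-(2/a) * (0 - 0) + 0 + (a-1) : ℝ) = a - 1 := by ring
      rw [h0] at h
      exact h.mono_left nhdsWithin_le_nhds
    refine hF.congr' ?_
    filter_upwards [self_mem_nhdsWithin] with x hx
    have hxa : a < x := hx
    have hx0 : (0:ℝ) < x := by linarith
    have hxa0 : x - a ≠ 0 := by intro h; linarith
    have hlog : Real.log (1 - a/x) = Real.log (x-a) - Real.log x := by
      rw [show (1 - a/x) = (x-a)/x by field_simp, Real.log_div hxa0 hx0.ne']
    unfold psiA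
    rw [hlog]
    field_simp
  have h1 : ∀ᶠ x in 𝓝[>] a, 0 < (x-a)^2 * psiA a x :=
    key.eventually_const_lt (by linarith)
  filter_upwards [h1, self_mem_nhdsWithin] with x hx1 hx2
  have hxa : (0:ℝ) < x - a := by simpa [sub_pos] using (hx2 : a < x)
  by_contra h
  push_neg at h
  nlinarith

/-- helper for uniqueness -/
lemma aux_contra {a y₁ y₂ : ℝ} (hy₂ : a < y₂) (h12 : y₁ < y₂)
    (hm : StrictMonoOn (fun x : ℝ => 1 - x + (1/a) * (x - x^2) * Real.log (1 - a/x)) (Set.Ioi y₁))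
    (hn : StrictAntiOn (fun x : ℝ => 1 - x + (1/a) * (x - x^2) * Real.log (1 - a/x))
      (Set.Ioo a y₂)) : False := by
  set m := max a y₁ with hm_def
  have hmy : m < y₂ := max_lt hy₂ h12
  set u := (3*m + y₂)/4 with hu_def
  set v := (m + y₂)/2 with hv_def
  have h1 : m < u := by rw [hu_def]; linarith
  have h2 : u < v := by rw [hu_def, hv_def]; linarith
  have h3 : v < y₂ := by rw [hv_def]; linarith
  have hua : a < u := lt_of_le_of_lt (le_max_left a y₁) h1
  have huy : y₁ < u := lt_of_le_of_lt (le_max_right a y₁) h1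
  have := hm (Set.mem_Ioi.2 huy) (Set.mem_Ioi.2 (huy.trans h2)) h2
  have := hn (Set.mem_Ioo.2 ⟨hua, h2.trans h3⟩) (Set.mem_Ioo.2 ⟨hua.trans h2, h3⟩) h2
  simp only at *
  linarith

/-- If `1 < a < 3/2`, then there exists a unique `x_a > a` such that
`g(x) = 1 - x + (1/a)*(x - x^2)*log(1 - a/x)` is strictly decreasing on `(a, x_a)` and
strictly increasing on `(x_a, ∞)`. -/
theorem g_unique_min (a : ℝ) (ha : 1 < a) (ha2 : a < 3/2) :
    ∃! xa : ℝ, a < xa ∧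
      StrictAntiOn (fun x : ℝ => 1 - x + (1/a) * (x - x^2) * Real.log (1 - a/x))
        (Set.Ioo a xa) ∧
      StrictMonoOn (fun x : ℝ => 1 - x + (1/a) * (x - x^2) * Real.log (1 - a/x))
        (Set.Ioi xa) := by
  have ha0 : (0:ℝ) < a := by linarith
  have h3a : (0:ℝ) < 3 - 2*a := by linarith
  set c := a/(3-2*a) with hc_def
  have hac : a < c := by
    rw [hc_def, lt_div_iff₀ h3a]
    nlinarith
  -- continuity helpers
  have contpsi : ∀ {s : Set ℝ}, (∀ x ∈ s, a < x) → ContinuousOn (psiA a) s := by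
    intro s hs
    exact fun x hx => ((hasDerivAt_psiA ha (hs x hx)).continuousAt).continuousWithinAt
  have contphi : ∀ {s : Set ℝ}, (∀ x ∈ s, a < x) → ContinuousOn (phiA a) s := by
    intro s hs
    exact fun x hx => ((hasDerivAt_phiA ha (hs x hx)).continuousAt).continuousWithinAt
  -- ψ strictly decreasing on Ioc a c
  have psi_anti : StrictAntiOn (psiA a) (Set.Ioc a c) := by
    refine strictAntiOn_of_deriv_neg (convex_Ioc a c)
      (contpsi fun x hx => hx.1) ?_
    intro x hx
    rw [interior_Ioc] at hx
    rw [(hasDerivAt_psiA ha hx.1).deriv]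
    apply div_neg_of_neg_of_pos
    · have : (3-2*a)*x < (3-2*a)*c := by
        exact mul_lt_mul_of_pos_left hx.2 h3a
      have hcc : (3-2*a)*c = a := by
        rw [hc_def]; field_simp
      nlinarith
    · have : 0 < x - a := by linarith [hx.1]
      have hx0 : 0 < x := by linarith [hx.1]
      positivity
  -- ψ strictly increasing on Ici c
  have psi_mono : StrictMonoOn (psiA a) (Set.Ici c) := by
    refine strictMonoOn_of_deriv_pos (convex_Ici c)
      (contpsi fun x hx => lt_of_lt_of_le hac hx) ?_
    intro x hx
    rw [interior_Ici] at hx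
    have hax : a < x := hac.trans hx
    rw [(hasDerivAt_psiA ha hax).deriv]
    apply div_pos
    · have : (3-2*a)*c < (3-2*a)*x := mul_lt_mul_of_pos_left hx h3a
      have hcc : (3-2*a)*c = a := by rw [hc_def]; field_simp
      nlinarith
    · have : 0 < x - a := by linarith
      have hx0 : 0 < x := by linarith
      positivity
  -- ψ < 0 on Ici c
  have psi_neg_Ici : ∀ x ∈ Set.Ici c, psiA a x < 0 := by
    have hle : ∀ x ∈ Set.Ici c, psiA a x ≤ 0 := by
      intro x hx
      refine ge_of_tendsto (psiA_tendsto ha) ?_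
      filter_upwards [eventually_ge_atTop x] with y hy
      rcases eq_or_lt_of_le hy with rfl | hy'
      · exact le_refl _
      · exact le_of_lt (psi_mono hx (le_trans hx hy) hy')
    intro x hx
    have h1 : psiA a x < psiA a (x+1) :=
      psi_mono hx (le_trans hx (by linarith : x ≤ x+1)) (by linarith)
    have h2 := hle (x+1) (le_trans hx (by linarith : x ≤ x+1))
    linarith
  -- find b₁ with ψ b₁ > 0, b₁ ∈ Ioo a c
  obtain ⟨b₁, hb₁pos, hb₁⟩ :
      ∃ b₁, 0 < psiA a b₁ ∧ b₁ ∈ Set.Ioo a c := by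
    have h := (psiA_pos_near ha).and
      (Ioo_mem_nhdsGT_of_mem (Set.mem_Ico.2 ⟨le_refl a, hac⟩))
    exact h.exists
  -- IVT for ψ: zero x₀
  obtain ⟨x₀, hx₀mem, hx₀⟩ : ∃ x₀ ∈ Set.Ioo b₁ c, psiA a x₀ = 0 := by
    have hcont : ContinuousOn (psiA a) (Set.Icc b₁ c) :=
      contpsi fun x hx => lt_of_lt_of_le hb₁.1 hx.1
    have h0 : (0:ℝ) ∈ Set.Ioo (psiA a c) (psiA a b₁) :=
      ⟨psi_neg_Ici c (le_refl c), hb₁pos⟩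
    obtain ⟨x₀, hx₀mem, hx₀⟩ := intermediate_value_Ioo' (le_of_lt hb₁.2) hcont h0
    exact ⟨x₀, hx₀mem, hx₀⟩
  have hax₀ : a < x₀ := hb₁.1.trans hx₀mem.1
  have hx₀c : x₀ < c := hx₀mem.2
  -- ψ > 0 on Ioo a x₀
  have psi_pos : ∀ x ∈ Set.Ioo a x₀, 0 < psiA a x := by
    intro x hx
    have := psi_anti (Set.mem_Ioc.2 ⟨hx.1, le_of_lt (hx.2.trans hx₀c)⟩)
      (Set.mem_Ioc.2 ⟨hax₀, le_of_lt hx₀c⟩) hx.2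
    rw [hx₀] at this
    exact this
  -- ψ < 0 on Ioi x₀
  have psi_neg : ∀ x ∈ Set.Ioi x₀, psiA a x < 0 := by
    intro x hx
    rcases le_or_gt x c with h | h
    · have := psi_anti (Set.mem_Ioc.2 ⟨hax₀, le_of_lt hx₀c⟩)
        (Set.mem_Ioc.2 ⟨hax₀.trans hx, h⟩) hx
      rw [hx₀] at this
      exact this
    · exact psi_neg_Ici x (le_of_lt h)
  -- φ strictly increasing on Ioc a x₀
  have phi_mono : StrictMonoOn (phiA a) (Set.Ioc a x₀) := by
    refine strictMonoOn_of_deriv_pos (convex_Ioc a x₀)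
      (contphi fun x hx => hx.1) ?_
    intro x hx
    rw [interior_Ioc] at hx
    rw [(hasDerivAt_phiA ha hx.1).deriv]
    exact psi_pos x hx
  -- φ strictly decreasing on Ici x₀
  have phi_anti : StrictAntiOn (phiA a) (Set.Ici x₀) := by
    refine strictAntiOn_of_deriv_neg (convex_Ici x₀)
      (contphi fun x hx => lt_of_lt_of_le hax₀ hx) ?_
    intro x hx
    rw [interior_Ici] at hx
    rw [(hasDerivAt_phiA ha (hax₀.trans hx)).deriv]
    exact psi_neg x hx
  -- φ > 0 on Ici x₀
  have phi_pos_Ici : ∀ x ∈ Set.Ici x₀, 0 < phiA a x := by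
    have hge : ∀ x ∈ Set.Ici x₀, 0 ≤ phiA a x := by
      intro x hx
      refine le_of_tendsto (phiA_tendsto ha) ?_
      filter_upwards [eventually_ge_atTop x] with y hy
      rcases eq_or_lt_of_le hy with rfl | hy'
      · exact le_refl _
      · exact le_of_lt (phi_anti hx (le_trans hx hy) hy')
    intro x hx
    have h1 : phiA a (x+1) < phiA a x :=
      phi_anti hx (le_trans hx (by linarith : x ≤ x+1)) (by linarith)
    have h2 := hge (x+1) (le_trans hx (by linarith : x ≤ x+1))
    linarith
  -- find b₂ ∈ Ioo a x₀ with φ b₂ < 0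
  obtain ⟨b₂, hb₂neg, hb₂⟩ : ∃ b₂, phiA a b₂ < 0 ∧ b₂ ∈ Set.Ioo a x₀ := by
    have h := (phiA_neg_near ha).and
      (Ioo_mem_nhdsGT_of_mem (Set.mem_Ico.2 ⟨le_refl a, hax₀⟩))
    exact h.exists
  -- IVT for φ: zero xa
  obtain ⟨xa, hxamem, hxa0⟩ : ∃ xa ∈ Set.Ioo b₂ x₀, phiA a xa = 0 := by
    have hcont : ContinuousOn (phiA a) (Set.Icc b₂ x₀) :=
      contphi fun x hx => lt_of_lt_of_le hb₂.1 hx.1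
    have h0 : (0:ℝ) ∈ Set.Ioo (phiA a b₂) (phiA a x₀) :=
      ⟨hb₂neg, phi_pos_Ici x₀ (le_refl x₀)⟩
    obtain ⟨xa, hmem, hval⟩ := intermediate_value_Ioo (le_of_lt hb₂.2) hcont h0
    exact ⟨xa, hmem, hval⟩
  have haxa : a < xa := hb₂.1.trans hxamem.1
  have hxax₀ : xa < x₀ := hxamem.2
  -- φ < 0 on Ioo a xa
  have phi_neg : ∀ x ∈ Set.Ioo a xa, phiA a x < 0 := by
    intro x hx
    have := phi_mono (Set.mem_Ioc.2 ⟨hx.1, le_of_lt (hx.2.trans hxax₀)⟩)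
      (Set.mem_Ioc.2 ⟨haxa, le_of_lt hxax₀⟩) hx.2
    rw [hxa0] at this
    exact this
  -- φ > 0 on Ioi xa
  have phi_pos : ∀ x ∈ Set.Ioi xa, 0 < phiA a x := by
    intro x hx
    rcases le_or_gt x x₀ with h | h
    · have := phi_mono (Set.mem_Ioc.2 ⟨haxa, le_of_lt hxax₀⟩)
        (Set.mem_Ioc.2 ⟨haxa.trans hx, h⟩) hx
      rw [hxa0] at this
      exact this
    · exact phi_pos_Ici x (le_of_lt h)
  refine ⟨xa, ⟨haxa, ?_, ?_⟩, ?_⟩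
  · refine strictAntiOn_of_deriv_neg (convex_Ioo a xa) ?_ ?_
    · exact fun x hx => ((hasDerivAt_gA ha hx.1).continuousAt).continuousWithinAt
    · intro x hx
      rw [interior_Ioo] at hx
      rw [(hasDerivAt_gA ha hx.1).deriv]
      exact phi_neg x hx
  · refine strictMonoOn_of_deriv_pos (convex_Ioi xa) ?_ ?_
    · exact fun x hx => ((hasDerivAt_gA ha (haxa.trans hx)).continuousAt).continuousWithinAt
    · intro x hx
      rw [interior_Ioi] at hx
      rw [(hasDerivAt_gA ha (haxa.trans hx)).deriv]
      exact phi_pos x hx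
  · rintro y ⟨hay, hanti_y, hmono_y⟩
    rcases lt_trichotomy y xa with h | h | h
    · exact absurd (aux_contra haxa h hmono_y (by
        refine strictAntiOn_of_deriv_neg (convex_Ioo a xa)
          (fun x hx => ((hasDerivAt_gA ha hx.1).continuousAt).continuousWithinAt) ?_
        intro x hx
        rw [interior_Ioo] at hx
        rw [(hasDerivAt_gA ha hx.1).deriv]
        exact phi_neg x hx)) id
    · exact h
    · refine absurd (aux_contra hay h ?_ hanti_y) id
      refine strictMonoOn_of_deriv_pos (convex_Ioi xa)
        (fun x hx => ((hasDerivAt_gA ha (haxa.trans hx)).continuousAt).continuousWithinAt) ?_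
      intro x hx
      rw [interior_Ioi] at hx
      rw [(hasDerivAt_gA ha (haxa.trans hx)).deriv]
      exact phi_pos x hx
end

section
/- If a ≥ 2, then for all r ∈ (1-1/a, 1), m(r) = -r/(1-r) - (1/a)·(r/(1-r)²)·log(1-a(1-r)) satisfies m(r) > a/2 ≥ 1. -/
open Real

private lemma aux_hasDeriv (x : ℝ) (hx : x < 1) :
    HasDerivAt (fun y : ℝ => -Real.log (1 - y) - 2*y/(2-y)) (1/(1-x) - 4/(2-x)^2) x := by
  have hx1 : (1:ℝ) - x ≠ 0 := by linarith
  have hx2 : (2:ℝ) - x ≠ 0 := by linarith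
  have h1 : HasDerivAt (fun y : ℝ => Real.log (1 - y)) (-(1/(1-x))) x := by
    have := (Real.hasDerivAt_log hx1).comp x
      ((hasDerivAt_const x (1:ℝ)).sub (hasDerivAt_id x))
    exact this.congr_deriv (by ring)
  have h2 : HasDerivAt (fun y : ℝ => 2*y/(2-y)) (4/(2-x)^2) x := by
    have := ((hasDerivAt_id x).const_mul (2:ℝ)).div
      ((hasDerivAt_const x (2:ℝ)).sub (hasDerivAt_id x)) hx2
    exact this.congr_deriv (by simp only [Pi.sub_apply, id]; ring)
  have := h1.neg.sub h2
  exact this.congr_deriv (by ring)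

private lemma aux_key_log (t : ℝ) (ht0 : 0 < t) (ht1 : t < 1) :
    2*t/(2-t) < -Real.log (1-t) := by
  have hmono : StrictMonoOn (fun y : ℝ => -Real.log (1 - y) - 2*y/(2-y)) (Set.Icc 0 t) := by
    apply strictMonoOn_of_deriv_pos (convex_Icc 0 t)
    · intro x hx
      exact (aux_hasDeriv x (lt_of_le_of_lt hx.2 ht1)).continuousAt.continuousWithinAt
    · intro x hx
      rw [interior_Icc] at hx
      have hx0 : 0 < x := hx.1
      have hx1 : x < 1 := lt_trans hx.2 ht1
      rw [(aux_hasDeriv x hx1).deriv]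
      have h1 : (0:ℝ) < 1 - x := by linarith
      have h2 : (0:ℝ) < 2 - x := by linarith
      rw [sub_pos, div_lt_div_iff₀ (by positivity) h1]
      nlinarith [sq_nonneg x]
  have h := hmono (Set.left_mem_Icc.mpr ht0.le) (Set.right_mem_Icc.mpr ht0.le) ht0
  simp only [mul_zero, sub_zero, Real.log_one, neg_zero, zero_div] at h
  linarith

/-- If `a ≥ 2`, then for all `r ∈ (1-1/a, 1)`,
`m(r) = -r/(1-r) - (1/a)*(r/(1-r)^2)*log(1-a*(1-r))` satisfies `m(r) > a/2 ≥ 1`. -/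
theorem m_gt_one_of_a_ge_two (a r : ℝ) (ha : 2 ≤ a) (hr : r ∈ Set.Ioo (1 - 1/a) 1) :
    a/2 < -r / (1 - r) - (1/a) * (r / (1 - r)^2) * Real.log (1 - a * (1 - r)) ∧
    1 ≤ a/2 := by
  obtain ⟨hr1, hr2⟩ := hr
  have ha0 : (0:ℝ) < a := by linarith
  set s : ℝ := 1 - r with hs
  have hs0 : 0 < s := by linarith
  have hsa : s < 1/a := by linarith
  have hts : a * s < 1 := by
    have := (lt_div_iff₀ ha0).mp hsa
    linarith [mul_comm a s]
  set t : ℝ := a * s with htdef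
  have ht0 : 0 < t := by positivity
  have ht1 : t < 1 := hts
  have h2t : (0:ℝ) < 2 - t := by linarith
  set L : ℝ := -Real.log (1 - t) with hL
  have hkey : 2*t/(2-t) < L := aux_key_log t ht0 ht1
  have hkey' : 2*t < L*(2-t) := by
    have := (div_lt_iff₀ h2t).mp hkey
    linarith
  refine ⟨?_, by linarith⟩
  have hr_eq : r = 1 - s := by simp [hs]
  have hlog : Real.log (1 - a * (1 - r)) = -L := by
    rw [hL, neg_neg, htdef, hs]
  have heq : -r / (1 - r) - (1/a) * (r / (1 - r)^2) * Real.log (1 - a * (1 - r))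
      = ((1-s)*L - a*s*(1-s)) / (a*s^2) := by
    rw [hlog, hr_eq]
    have hsne : s ≠ 0 := ne_of_gt hs0
    have hane : a ≠ 0 := ne_of_gt ha0
    rw [sub_sub_cancel]
    field_simp
    ring
  rw [heq, lt_div_iff₀ (by positivity)]
  -- need: a/2 * (a*s^2) < (1-s)*L - a*s*(1-s)
  -- i.e. t^2/2 < (1-s)*L - t*(1-s)
  have hs1 : s < 1 := by nlinarith
  have h1s : 0 < 1 - s := by linarith
  -- from hkey': L*(2-t) > 2t; multiply by (1-s):
  -- (1-s)*L*(2-t) > 2t(1-s)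
  -- and 2t(1-s) - (2-t)*(t(1-s)+t^2/2) = t^2*(t/2 - s) ≥ 0 since t = a*s ≥ 2*s
  clear_value s t L
  have hts2 : 2*s ≤ t := by nlinarith
  have e1 : a/2 * (a*s^2) = t^2/2 := by rw [htdef]; ring
  have e2 : a*s*(1-s) = t*(1-s) := by rw [htdef]
  rw [e1, e2]
  have main : (t^2/2 + t*(1-s)) * (2-t) < ((1-s)*L) * (2-t) := by
    nlinarith [mul_lt_mul_of_pos_left hkey' h1s,
      mul_nonneg (mul_nonneg ht0.le ht0.le) (by linarith : (0:ℝ) ≤ t/2 - s)]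
  have := lt_of_mul_lt_mul_right main h2t.le
  linarith
end

section
/- If 3/2 ≤ a < 2, then there exists a unique r_c ∈ (1-1/a, 1) such that m(r_c) = 1, m(r) > 1 for r ∈ (1-1/a, r_c), and m(r) < 1 for r ∈ (r_c, 1), where m(r) = -r/(1-r) - (1/a)·(r/(1-r)²)·log(1-a(1-r)). -/
open Real

namespace CriticalR

open Set

noncomputable def gfun (a : ℝ) : ℝ → ℝ :=
  fun x => 1 - x + (1/a) * (x - x^2) * Real.log (1 - a/x)

/-- Order-4 lower bound for `log (1-t)`. -/
lemma log_one_sub_bound {t : ℝ} (h0 : 0 ≤ t) (h1 : t < 1) :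
    -Real.log (1 - t) ≤ t + t^2/2 + t^3/3 + t^4/(4*(1-t)) := by
  set f : ℝ → ℝ := fun s => s + s^2/2 + s^3/3 + s^4/(4*(1-s)) + Real.log (1-s) with hf
  have hder : ∀ s : ℝ, s < 1 → HasDerivAt f (s^4/(4*(1-s)^2)) s := by
    intro s hs
    have h1s : (0:ℝ) < 1 - s := by linarith
    have hone : HasDerivAt (fun u : ℝ => 1 - u) (-1) s := by
      simpa using (hasDerivAt_id s).const_sub 1
    have hlog : HasDerivAt (fun u : ℝ => Real.log (1-u)) (-1/(1-s)) s :=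
      hone.log h1s.ne'
    have hdenum : HasDerivAt (fun u : ℝ => 4*(1-u)) (-4) s := by
      simpa using hone.const_mul 4
    have hdiv : HasDerivAt (fun u : ℝ => u^4/(4*(1-u)))
        ((4*s^3*(4*(1-s)) - s^4*(-4))/(4*(1-s))^2) s := by
      refine HasDerivAt.div ?_ hdenum (by positivity)
      simpa using hasDerivAt_pow 4 s
    have hpoly : HasDerivAt (fun u : ℝ => u + u^2/2 + u^3/3) (1 + s + s^2) s := by
      have h2 : HasDerivAt (fun u : ℝ => u^2/2) s s := by
        simpa using (hasDerivAt_pow 2 s).div_const 2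
      have h3 : HasDerivAt (fun u : ℝ => u^3/3) (s^2) s := by
        have := (hasDerivAt_pow 3 s).div_const 3
        refine this.congr_deriv ?_; push_cast; ring
      exact ((hasDerivAt_id s).add h2).add h3
    have := (hpoly.add hdiv).add hlog
    refine this.congr_deriv ?_
    field_simp
    ring
  have hmono : MonotoneOn f (Ico (0:ℝ) 1) := by
    have hint : interior (Ico (0:ℝ) 1) = Ioo 0 1 := interior_Ico
    apply monotoneOn_of_deriv_nonneg (convex_Ico 0 1)
    · intro x hx
      exact (hder x hx.2).continuousAt.continuousWithinAt
    · intro x hx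
      rw [hint] at hx
      exact (hder x hx.2).differentiableAt.differentiableWithinAt
    · intro x hx
      rw [hint] at hx
      rw [(hder x hx.2).deriv]
      have : (0:ℝ) < 1 - x := by linarith [hx.2]
      positivity
  have h0f : f 0 = 0 := by simp [hf]
  have := hmono (show (0:ℝ) ∈ Ico (0:ℝ) 1 by constructor <;> norm_num)
    (show t ∈ Ico (0:ℝ) 1 from ⟨h0, h1⟩) h0
  rw [h0f] at this
  simp only [hf] at this
  linarith

lemma hasDerivAt_gfun {a x : ℝ} (ha : 0 < a) (hx : a < x) :
    HasDerivAt (gfun a) (-1 + (1/a)*(1-2*x)*Real.log (1-a/x) + (1-x)/(x-a)) x := by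
  have hx0 : 0 < x := ha.trans hx
  have h1 : (0:ℝ) < 1 - a/x := by
    have : a/x < 1 := (div_lt_one hx0).2 hx
    linarith
  have hxa : (0:ℝ) < x - a := sub_pos.2 hx
  have hd1 : HasDerivAt (fun x : ℝ => 1 - a/x) (a/x^2) x := by
    have h := ((hasDerivAt_inv hx0.ne').const_mul a).const_sub 1
    refine h.congr_deriv ?_
    field_simp
  have hlog : HasDerivAt (fun x : ℝ => Real.log (1 - a/x)) ((a/x^2)/(1-a/x)) x :=
    hd1.log h1.ne'
  have hpoly : HasDerivAt (fun x : ℝ => (1/a)*(x - x^2)) ((1/a)*(1-2*x)) x := by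
    have h := ((hasDerivAt_id x).sub (hasDerivAt_pow 2 x)).const_mul (1/a)
    refine h.congr_deriv ?_
    push_cast; ring
  have hmul := hpoly.mul hlog
  have hone : HasDerivAt (fun u : ℝ => 1 - u) (-1) x := by
    simpa using (hasDerivAt_id x).const_sub 1
  have hfull := hone.add hmul
  refine hfull.congr_deriv ?_
  have hne : (1:ℝ) - a/x ≠ 0 := h1.ne'
  field_simp
  ring

lemma deriv_gfun_neg {a x : ℝ} (ha : 3/2 ≤ a) (ha2 : a < 2) (hx : a < x) :
    -1 + (1/a)*(1-2*x)*Real.log (1-a/x) + (1-x)/(x-a) < 0 := by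
  have ha0 : (0:ℝ) < a := by linarith
  have hx0 : 0 < x := ha0.trans hx
  have hxa : (0:ℝ) < x - a := sub_pos.2 hx
  have ht0 : (0:ℝ) ≤ a/x := by positivity
  have ht1 : a/x < 1 := (div_lt_one hx0).2 hx
  have h1t : (0:ℝ) < 1 - a/x := by linarith
  have hlog : -Real.log (1 - a/x) ≤
      a/x + (a/x)^2/2 + (a/x)^3/3 + (a/x)^4/(4*(1-a/x)) := log_one_sub_bound ht0 ht1
  have h2x : (0:ℝ) < (2*x-1)/a := div_pos (by linarith) ha0
  have hstep : (1/a)*(1-2*x)*Real.log (1-a/x) ≤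
      (2*x-1)/a * (a/x + (a/x)^2/2 + (a/x)^3/3 + (a/x)^4/(4*(1-a/x))) := by
    calc (1/a)*(1-2*x)*Real.log (1-a/x) = (2*x-1)/a * (-Real.log (1-a/x)) := by ring
      _ ≤ _ := mul_le_mul_of_nonneg_left hlog h2x.le
  have hid : (2*x-1)/a * (a/x + (a/x)^2/2 + (a/x)^3/3 + (a/x)^4/(4*(1-a/x)))
      = 1 + (x-1)/(x-a) - a*(2*(2*a-3)*x^2 + 2*a*(a-1)*x - a^2)/(12*x^3*(x-a)) := by
    field_simp
    ring
  have hnum : 0 < 2*(2*a-3)*x^2 + 2*a*(a-1)*x - a^2 := by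
    nlinarith [mul_pos hxa hx0, mul_nonneg (mul_nonneg (by linarith : (0:ℝ) ≤ 2*a-3) hxa.le) hx0.le,
      mul_pos ha0 hxa, mul_pos (mul_pos ha0 ha0) hxa]
  have hfrac : 0 < a*(2*(2*a-3)*x^2 + 2*a*(a-1)*x - a^2)/(12*x^3*(x-a)) := by positivity
  have hneg : (1-x)/(x-a) = -((x-1)/(x-a)) := by ring
  linarith [hstep, hid.le, hid.ge]

lemma gfun_strictAnti {a : ℝ} (ha : 3/2 ≤ a) (ha2 : a < 2) :
    StrictAntiOn (gfun a) (Ioi a) := by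
  have ha0 : (0:ℝ) < a := by linarith
  apply strictAntiOn_of_deriv_neg (convex_Ioi a)
  · intro x hx
    exact (hasDerivAt_gfun ha0 hx).continuousAt.continuousWithinAt
  · intro x hx
    rw [interior_Ioi] at hx
    rw [(hasDerivAt_gfun ha0 hx).deriv]
    exact deriv_gfun_neg ha ha2 hx

lemma log21 : (3:ℝ) ≤ Real.log 21 := by
  rw [Real.le_log_iff_exp_le (by norm_num)]
  have h := Real.exp_one_lt_d9
  have hp := Real.exp_pos 1
  have h3 : Real.exp 3 = Real.exp 1 * Real.exp 1 * Real.exp 1 := by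
    rw [← Real.exp_add, ← Real.exp_add]; norm_num
  rw [h3]
  nlinarith [h, hp]

lemma g_big {a x : ℝ} (ha : 3/2 ≤ a) (ha2 : a < 2) (hxdef : x = 21*a/20) :
    1 < gfun a x := by
  have ha0 : (0:ℝ) < a := by linarith
  have hx1 : (63:ℝ)/40 ≤ x := by rw [hxdef]; linarith
  have harg : 1 - a/x = 1/21 := by
    rw [hxdef]; field_simp; ring
  have hcoef : (1/a)*(x - x^2) = (21/20)*(1-x) := by
    rw [hxdef]; field_simp
  have hlog : Real.log ((1:ℝ)/21) = -Real.log 21 := by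
    rw [one_div, Real.log_inv]
  show 1 < 1 - x + (1/a) * (x - x^2) * Real.log (1 - a/x)
  rw [harg, hlog, hcoef]
  have hL := log21
  have hprod : (0:ℝ) ≤ (x - 1) * (Real.log 21 - 3) :=
    mul_nonneg (by linarith) (by linarith)
  linarith [hprod, hL, hx1]

set_option maxHeartbeats 1000000 in
lemma g_small {a x : ℝ} (ha : 3/2 ≤ a) (ha2 : a < 2)
    (hxdef : x = a + 4*a^2/(3*(2-a))) : gfun a x < 1 := by
  have ha0 : (0:ℝ) < a := by linarith
  have h2a : (0:ℝ) < 2 - a := by linarith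
  have hxa : x - a = 4*a^2/(3*(2-a)) := by rw [hxdef]; ring
  have hxa0 : (0:ℝ) < x - a := by rw [hxa]; positivity
  have hx : a < x := by linarith
  have hx0 : (0:ℝ) < x := ha0.trans hx
  have hx1 : (1:ℝ) < x := by linarith
  have ht0 : (0:ℝ) < a/x := by positivity
  have ht1 : a/x < 1 := (div_lt_one hx0).2 hx
  have h1t : (0:ℝ) < 1 - a/x := by linarith
  have hb4 : -Real.log (1 - a/x) ≤
      a/x + (a/x)^2/2 + (a/x)^3/3 + (a/x)^4/(4*(1-a/x)) :=
    log_one_sub_bound ht0.le ht1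
  have h34 : (a/x)^3/3 + (a/x)^4/(4*(1-a/x)) ≤ (a/x)^3/(3*(1-a/x)) := by
    have hd : (a/x)^3/(3*(1-a/x)) - ((a/x)^3/3 + (a/x)^4/(4*(1-a/x)))
        = (a/x)^4/(12*(1-a/x)) := by field_simp; ring
    nlinarith [hd, div_nonneg (by positivity : (0:ℝ) ≤ (a/x)^4) (by positivity : (0:ℝ) ≤ 12*(1-a/x))]
  have hb3 : -Real.log (1 - a/x) ≤ a/x + (a/x)^2/2 + (a/x)^3/(3*(1-a/x)) := by linarith
  have hcoef : (0:ℝ) < x*(x-1)/a := div_pos (mul_pos hx0 (by linarith)) ha0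
  have hstep : (1/a)*(x - x^2)*Real.log (1 - a/x) ≤
      (x*(x-1)/a) * (a/x + (a/x)^2/2 + (a/x)^3/(3*(1-a/x))) := by
    calc (1/a)*(x - x^2)*Real.log (1 - a/x)
        = (x*(x-1)/a) * (-Real.log (1-a/x)) := by ring
      _ ≤ _ := mul_le_mul_of_nonneg_left hb3 hcoef.le
  have hid : (x*(x-1)/a) * (a/x + (a/x)^2/2 + (a/x)^3/(3*(1-a/x)))
      = (x-1) + a*(x-1)/(2*x) + a^2*(x-1)/(3*x*(x-a)) := by
    field_simp
  have hb1 : a*(x-1)/(2*x) < a/2 := by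
    rw [div_lt_div_iff₀ (by positivity) (by norm_num)]
    nlinarith
  have hb2 : a^2*(x-1)/(3*x*(x-a)) < a^2/(3*(x-a)) := by
    rw [div_lt_div_iff₀ (by positivity) (by positivity)]
    nlinarith [mul_pos (mul_pos ha0 ha0) hxa0]
  have hb2' : a^2/(3*(x-a)) = (2-a)/4 := by
    rw [hxa]; field_simp
  show 1 - x + (1/a) * (x - x^2) * Real.log (1 - a/x) < 1
  nlinarith [hstep, hid, hb1, hb2, hb2']

end CriticalR

open CriticalR Set in
/-- If `3/2 ≤ a < 2`, then there exists a unique `r_c ∈ (1-1/a, 1)` such that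
`m(r_c) = 1`, `m(r) > 1` for `r ∈ (1-1/a, r_c)` and `m(r) < 1` for `r ∈ (r_c, 1)`,
where `m(r) = -r/(1-r) - (1/a)*(r/(1-r)^2)*log(1-a*(1-r))`. -/
theorem critical_r_exists (a : ℝ) (ha : 3/2 ≤ a) (ha2 : a < 2) :
    ∃! rc : ℝ, rc ∈ Set.Ioo (1 - 1/a) 1 ∧
      (-rc / (1 - rc) - (1/a) * (rc / (1 - rc)^2) * Real.log (1 - a * (1 - rc)) = 1) ∧
      (∀ r ∈ Set.Ioo (1 - 1/a) rc,
        1 < -r / (1 - r) - (1/a) * (r / (1 - r)^2) * Real.log (1 - a * (1 - r))) ∧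
      (∀ r ∈ Set.Ioo rc 1,
        -r / (1 - r) - (1/a) * (r / (1 - r)^2) * Real.log (1 - a * (1 - r)) < 1) := by
  have ha0 : (0:ℝ) < a := by linarith
  have h2a : (0:ℝ) < 2 - a := by linarith
  set M : ℝ → ℝ := fun r =>
    -r / (1 - r) - (1/a) * (r / (1 - r)^2) * Real.log (1 - a * (1 - r)) with hM
  -- relation to gfun
  have hMg : ∀ r ∈ Ioo (1 - 1/a) 1, M r = gfun a (1/(1-r)) := by
    intro r hr
    have h1r : (0:ℝ) < 1 - r := by linarith [hr.2]
    have harg : a / (1/(1-r)) = a * (1-r) := by rw [one_div, div_inv_eq_mul]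
    simp only [hM, gfun, harg]
    field_simp
    ring
  have hmap : ∀ r ∈ Ioo (1 - 1/a) 1, 1/(1-r) ∈ Ioi a := by
    intro r hr
    have h1r : (0:ℝ) < 1 - r := by linarith [hr.2]
    have h1ra : 1 - r < 1/a := by linarith [hr.1]
    rw [mem_Ioi, lt_div_iff₀ h1r]
    calc a * (1-r) < a * (1/a) := by
          exact mul_lt_mul_of_pos_left h1ra ha0
      _ = 1 := by field_simp
  have hanti : StrictAntiOn M (Ioo (1 - 1/a) 1) := by
    intro r hr s hs hrs
    rw [hMg r hr, hMg s hs]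
    have h1s : (0:ℝ) < 1 - s := by linarith [hs.2]
    exact gfun_strictAnti ha ha2 (hmap r hr) (hmap s hs)
      (one_div_lt_one_div_of_lt h1s (by linarith))
  -- the two sample points
  set x₁ : ℝ := 21*a/20 with hx₁
  set x₂ : ℝ := a + 4*a^2/(3*(2-a)) with hx₂
  have hax₁ : a < x₁ := by rw [hx₁]; linarith
  have hax₂ : a < x₂ := by
    rw [hx₂]
    have : (0:ℝ) < 4*a^2/(3*(2-a)) := by positivity
    linarith
  have hx₁x₂ : x₁ < x₂ := by
    rw [hx₁, hx₂]
    have h1 : a/20 < 4*a^2/(3*(2-a)) := by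
      rw [div_lt_div_iff₀ (by norm_num) (by positivity)]
      nlinarith
    linarith
  have hx₁0 : (0:ℝ) < x₁ := ha0.trans hax₁
  have hx₂0 : (0:ℝ) < x₂ := ha0.trans hax₂
  set r₁ : ℝ := 1 - 1/x₁ with hr₁
  set r₂ : ℝ := 1 - 1/x₂ with hr₂
  have hback : ∀ x : ℝ, 0 < x → 1/(1 - (1 - 1/x)) = x := by
    intro x hx
    rw [show (1:ℝ) - (1 - 1/x) = 1/x by ring, one_div_one_div]
  have hmem : ∀ x : ℝ, a < x → (1 - 1/x) ∈ Ioo (1 - 1/a) 1 := by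
    intro x hx
    have hx0 : (0:ℝ) < x := ha0.trans hx
    constructor
    · have : 1/x < 1/a := one_div_lt_one_div_of_lt ha0 hx
      linarith
    · have : (0:ℝ) < 1/x := by positivity
      linarith
  have hr₁m : r₁ ∈ Ioo (1 - 1/a) 1 := hmem x₁ hax₁
  have hr₂m : r₂ ∈ Ioo (1 - 1/a) 1 := hmem x₂ hax₂
  have hr₁₂ : r₁ < r₂ := by
    rw [hr₁, hr₂]
    have := one_div_lt_one_div_of_lt hx₁0 hx₁x₂
    linarith
  have hMr₁ : 1 < M r₁ := by
    rw [hMg r₁ hr₁m, hr₁, hback x₁ hx₁0]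
    exact g_big ha ha2 hx₁
  have hMr₂ : M r₂ < 1 := by
    rw [hMg r₂ hr₂m, hr₂, hback x₂ hx₂0]
    exact g_small ha ha2 hx₂
  -- continuity of M on [r₁, r₂]
  have hsub : Icc r₁ r₂ ⊆ Ioo (1 - 1/a) 1 := fun r hr =>
    ⟨lt_of_lt_of_le hr₁m.1 hr.1, lt_of_le_of_lt hr.2 hr₂m.2⟩
  have hcont : ContinuousOn M (Icc r₁ r₂) := by
    intro r hr
    have hrm := hsub hr
    have h1r : (0:ℝ) < 1 - r := by linarith [hrm.2]
    have hgc : ContinuousAt (gfun a) (1/(1-r)) :=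
      (hasDerivAt_gfun ha0 (hmap r hrm)).continuousAt
    have hic : ContinuousAt (fun r : ℝ => 1/(1-r)) r := by
      exact (continuousAt_const.div ((continuous_const.sub continuous_id).continuousAt) h1r.ne')
    have : ContinuousAt (fun r => gfun a (1/(1-r))) r := ContinuousAt.comp (g := gfun a) (f := fun r : ℝ => 1/(1-r)) hgc hic
    apply ContinuousAt.continuousWithinAt
    apply this.congr
    filter_upwards [isOpen_Ioo.mem_nhds hrm] with s hs
    exact (hMg s hs).symm
  -- intermediate value
  have hIVT : (1:ℝ) ∈ M '' Icc r₁ r₂ := by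
    apply intermediate_value_Icc' hr₁₂.le hcont
    exact ⟨hMr₂.le, hMr₁.le⟩
  obtain ⟨rc, hrcI, hrc1⟩ := hIVT
  have hrcm : rc ∈ Ioo (1 - 1/a) 1 := hsub hrcI
  refine ⟨rc, ⟨hrcm, hrc1, ?_, ?_⟩, ?_⟩
  · intro r hr
    have hrm : r ∈ Ioo (1 - 1/a) 1 := ⟨hr.1, hr.2.trans hrcm.2⟩
    have := hanti hrm hrcm hr.2
    rw [hrc1] at this
    exact this
  · intro r hr
    have hrm : r ∈ Ioo (1 - 1/a) 1 := ⟨hrcm.1.trans hr.1, hr.2⟩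
    have := hanti hrcm hrm hr.1
    rw [hrc1] at this
    exact this
  · rintro y ⟨hym, hy1, -, -⟩
    have hy1' : M y = 1 := hy1
    exact hanti.injOn hym hrcm (hy1'.trans hrc1.symm)
end
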